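/- For the Poisson log-likelihood l(β) = Σ_i [y_i x_iβ − exp(x_iβ)], if γ is a nonzero vector with x_iγ ≠ 0 for at least one observation with y_i > 0, then l(β + kγ) → −∞ as k → ∞ for every β. -/

import Mathlib

open Filter Real

lemma poisson_term_bound (y t : ℝ) (hy : 0 ≤ y) :
    y * t - Real.exp t ≤ (if y = 0 then 0 else y * Real.log y - y) := by
  split_ifs with h
  · simp [h, (Real.exp_pos t).le]
  · have hy' : 0 < y := lt_of_le_of_ne hy (Ne.symm h)
    have h1 : t - Real.log y + 1 ≤ Real.exp (t - Real.log y) :=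
      Real.add_one_le_exp _
    have h2 : Real.exp (t - Real.log y) = Real.exp t / y := by
      rw [Real.exp_sub, Real.exp_log hy']
    rw [h2] at h1
    have h3 := mul_le_mul_of_nonneg_right h1 hy'.le
    rw [div_mul_cancel₀ _ (ne_of_gt hy')] at h3
    nlinarith

lemma tendsto_mul_sub_exp_atBot (y : ℝ) :
    Tendsto (fun t : ℝ => y * t - Real.exp t) atTop atBot := by
  have h0 : Tendsto (fun t : ℝ => (1 : ℝ) - y * (t * Real.exp (-t))) atTop (nhds 1) := by
    have := (Real.tendsto_pow_mul_exp_neg_atTop_nhds_zero 1).const_mul y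
    simpa using (tendsto_const_nhds.sub this)
  have h1 : Tendsto (fun t : ℝ => Real.exp t * (1 - y * (t * Real.exp (-t)))) atTop atTop :=
    Real.tendsto_exp_atTop.atTop_mul_pos one_pos h0
  have h2 : Tendsto (fun t : ℝ => Real.exp t - y * t) atTop atTop := by
    refine h1.congr fun t => ?_
    rw [Real.exp_neg]
    have := (Real.exp_pos t).ne'
    field_simp
  have := tendsto_neg_atTop_atBot.comp h2
  refine this.congr fun t => ?_
  simp [neg_sub]

/-- Poisson log-likelihood tends to −∞ along any nonzero direction γ with
x_iγ ≠ 0 for at least one observation with y_i > 0. -/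
theorem stmt18 {N M : ℕ} (x : Fin N → Fin M → ℝ) (y : Fin N → ℝ)
    (hy : ∀ i, 0 ≤ y i)
    (l : (Fin M → ℝ) → ℝ)
    (hl : ∀ β : Fin M → ℝ, l β =
      ∑ i, (y i * (∑ m, x i m * β m) - Real.exp (∑ m, x i m * β m)))
    (γ : Fin M → ℝ) (hγ : γ ≠ 0)
    (hne : ∃ i, 0 < y i ∧ (∑ m, x i m * γ m) ≠ 0) :
    ∀ β : Fin M → ℝ,
      Filter.Tendsto (fun k : ℝ => l (β + k • γ)) Filter.atTop Filter.atBot := by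
  intro β
  obtain ⟨i₀, hy₀, hb₀⟩ := hne
  set a : Fin N → ℝ := fun i => ∑ m, x i m * β m with ha
  set b : Fin N → ℝ := fun i => ∑ m, x i m * γ m with hb
  have key : ∀ k : ℝ, ∀ i, (∑ m, x i m * (β + k • γ) m) = a i + k * b i := by
    intro k i
    simp only [ha, hb, Pi.add_apply, Pi.smul_apply, smul_eq_mul, Finset.mul_sum]
    rw [← Finset.sum_add_distrib]
    congr 1; ext m; ring
  set C : Fin N → ℝ := fun i => if y i = 0 then 0 else y i * Real.log (y i) - y i with hC
  set g : ℝ → ℝ := fun k =>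
    (∑ i ∈ Finset.univ.erase i₀, C i) + (y i₀ * (a i₀ + k * b i₀) - Real.exp (a i₀ + k * b i₀))
    with hg
  have hterm : Tendsto (fun k : ℝ => y i₀ * (a i₀ + k * b i₀) - Real.exp (a i₀ + k * b i₀))
      atTop atBot := by
    rcases hb₀.lt_or_gt with hlt | hgt
    · -- b i₀ < 0 : linear part goes to -∞, exp part ≤ 0
      have hlin : Tendsto (fun k : ℝ => a i₀ + k * b i₀) atTop atBot := by
        exact tendsto_atBot_add_const_left _ _ (tendsto_id.atTop_mul_const_of_neg hlt)
      have hmul : Tendsto (fun k : ℝ => y i₀ * (a i₀ + k * b i₀)) atTop atBot := by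
        exact hlin.const_mul_atBot hy₀
      refine tendsto_atBot_mono (fun k => ?_) hmul
      have := (Real.exp_pos (a i₀ + k * b i₀)).le
      linarith
    · -- b i₀ > 0 : compose with tendsto_mul_sub_exp_atBot
      have hlin : Tendsto (fun k : ℝ => a i₀ + k * b i₀) atTop atTop :=
        tendsto_atTop_add_const_left _ _ (tendsto_id.atTop_mul_const hgt)
      exact (tendsto_mul_sub_exp_atBot (y i₀)).comp hlin
  have hgt : Tendsto g atTop atBot := tendsto_atBot_add_const_left _ _ hterm
  refine tendsto_atBot_mono (fun k => ?_) hgt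
  rw [hl]
  have hsplit : (∑ i, (y i * (∑ m, x i m * (β + k • γ) m)
      - Real.exp (∑ m, x i m * (β + k • γ) m)))
      = (y i₀ * (a i₀ + k * b i₀) - Real.exp (a i₀ + k * b i₀))
        + ∑ i ∈ Finset.univ.erase i₀,
          (y i * (a i + k * b i) - Real.exp (a i + k * b i)) := by
    simp_rw [key k]
    exact (Finset.add_sum_erase _ _ (Finset.mem_univ i₀)).symm
  rw [hsplit]
  simp only [hg]
  have hle : ∑ i ∈ Finset.univ.erase i₀, (y i * (a i + k * b i) - Real.exp (a i + k * b i))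
      ≤ ∑ i ∈ Finset.univ.erase i₀, C i :=
    Finset.sum_le_sum fun i _ => poisson_term_bound (y i) _ (hy i)
  linarith
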